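/- Let 0 ≤ e < 1, define k(f) = 1 + e·cos f, let J : ℝ → ℝ be differentiable with J'(f) = 1/k(f)², and set φ₁(f) = k(f)·sin f and φ₂(f) = 3e²·k(f)·J(f)·sin f + k(f)·cos f − 2e. Then for all f ∈ ℝ, the Wronskian satisfies φ₁'(f)·φ₂(f) − φ₁(f)·φ₂'(f) = 1 − e². -/

import Mathlib

/-- The Wronskian of the two Yamanaka–Ankersen fundamental solutions
`φ₁ = k·sin f` and `φ₂ = 3e²·k·J·sin f + k·cos f − 2e` (with `k = 1 + e·cos f`
and `J' = 1/k²`) satisfies `φ₁'·φ₂ − φ₁·φ₂' = 1 − e²`. -/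
theorem stmt_5 (e : ℝ) (he0 : 0 ≤ e) (he1 : e < 1)
    (k : ℝ → ℝ) (hk : ∀ f, k f = 1 + e * Real.cos f)
    (J : ℝ → ℝ) (hJ : Differentiable ℝ J) (hJ' : ∀ f, deriv J f = 1 / (k f) ^ 2)
    (φ₁ φ₂ : ℝ → ℝ) (hφ₁ : ∀ f, φ₁ f = k f * Real.sin f)
    (hφ₂ : ∀ f, φ₂ f = 3 * e ^ 2 * k f * J f * Real.sin f + k f * Real.cos f - 2 * e) :
    ∀ f, deriv φ₁ f * φ₂ f - φ₁ f * deriv φ₂ f = 1 - e ^ 2 := by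
  have hkfun : k = fun x => 1 + e * Real.cos x := funext hk
  subst hkfun
  have hφ₁fun : φ₁ = fun x => (1 + e * Real.cos x) * Real.sin x := funext hφ₁
  have hφ₂fun : φ₂ = fun x =>
      3 * e ^ 2 * (1 + e * Real.cos x) * J x * Real.sin x
        + (1 + e * Real.cos x) * Real.cos x - 2 * e := funext hφ₂
  subst hφ₁fun hφ₂fun
  intro f
  have hk0 : (1 + e * Real.cos f) ≠ 0 := by
    have := Real.neg_one_le_cos f
    nlinarith
  have hc : HasDerivAt Real.cos (-Real.sin f) f := Real.hasDerivAt_cos f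
  have hs : HasDerivAt Real.sin (Real.cos f) f := Real.hasDerivAt_sin f
  have hkD : HasDerivAt (fun x => 1 + e * Real.cos x) (e * -Real.sin f) f :=
    (hc.const_mul e).const_add 1
  have hJd : HasDerivAt J (1 / (1 + e * Real.cos f) ^ 2) f := by
    have h := (hJ f).hasDerivAt
    rwa [hJ' f] at h
  have hφ₁D : HasDerivAt (fun x => (1 + e * Real.cos x) * Real.sin x)
      ((e * -Real.sin f) * Real.sin f + (1 + e * Real.cos f) * Real.cos f) f :=
    hkD.mul hs
  have hkd3 : HasDerivAt (fun x => 3 * e ^ 2 * (1 + e * Real.cos x))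
      (3 * e ^ 2 * (e * -Real.sin f)) f := hkD.const_mul (3 * e ^ 2)
  have hφ₂D : HasDerivAt (fun x =>
      3 * e ^ 2 * (1 + e * Real.cos x) * J x * Real.sin x
        + (1 + e * Real.cos x) * Real.cos x - 2 * e)
      (((3 * e ^ 2 * (e * -Real.sin f)) * J f
          + 3 * e ^ 2 * (1 + e * Real.cos f) * (1 / (1 + e * Real.cos f) ^ 2)) * Real.sin f
        + 3 * e ^ 2 * (1 + e * Real.cos f) * J f * Real.cos f
        + ((e * -Real.sin f) * Real.cos f + (1 + e * Real.cos f) * (-Real.sin f))) f := by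
    exact (((hkd3.mul hJd).mul hs).add (hkD.mul hc)).sub_const (2 * e)
  rw [hφ₁D.deriv, hφ₂D.deriv]
  have hpyth : Real.sin f ^ 2 + Real.cos f ^ 2 = 1 := Real.sin_sq_add_cos_sq f
  field_simp
  linear_combination ((1 + e * Real.cos f) ^ 4 - e ^ 2 * (1 + e * Real.cos f) ^ 2 + (-2 * e * Real.cos f - 5 * e ^ 2 * Real.cos f ^ 2 + 2 * e ^ 3 * Real.cos f - 4 * e ^ 3 * Real.cos f ^ 3 + e ^ 4 * Real.cos f ^ 2 - e ^ 4 * Real.cos f ^ 4)) * hpyth
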